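/- arXiv:1702.08488 — 5 statements merged into one kernel-verified Lean document; each statement's English description precedes it below -/
import Mathlib

section
/- Let V be a finite-dimensional complex vector space, φ a linear endomorphism of V, and t a nonzero complex number which is not a root of unity. Suppose there exists an invertible linear endomorphism ψ of V with ψ ∘ φ = t · (φ ∘ ψ) (equivalently ψ ∘ φ ∘ ψ⁻¹ = t·φ). Then there exists a family of subspaces (W_i)_{i∈ℤ} of V, all but finitely many equal to {0} and each invariant under ψ, such that V is the internal direct sum ⨁_{i∈ℤ} W_i and φ(W_i) ⊆ W_{i−1} for every i ∈ ℤ. -/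
/-- Blocks of an independent family of submodules over disjoint index sets are disjoint. -/
lemma block_disjoint {R N ι : Type*} [Ring R] [AddCommGroup N] [Module R N] [DecidableEq ι]
    {p : ι → Submodule R N} (hp : iSupIndep p)
    (A B : Set ι) [DecidablePred (· ∈ A)] [DecidablePred (· ∈ B)]
    (hAB : ∀ i, i ∈ A → i ∉ B) :
    Disjoint (⨆ i ∈ A, p i) (⨆ i ∈ B, p i) := by
  rw [Submodule.disjoint_def]
  intro x hxA hxB
  rw [Submodule.mem_biSup_iff_exists_dfinsupp] at hxA hxB
  obtain ⟨f, hf⟩ := hxA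
  obtain ⟨g, hg⟩ := hxB
  have key : f.filter (· ∈ A) = g.filter (· ∈ B) :=
    hp.dfinsupp_lsum_injective (by rw [hf, hg])
  have hzero : f.filter (· ∈ A) = 0 := by
    ext i
    by_cases hiA : i ∈ A
    · have h2 := congrArg (fun d => d i) key
      simp only [DFinsupp.filter_apply] at h2
      rw [if_pos hiA, if_neg (hAB i hiA)] at h2
      simp [DFinsupp.filter_apply, if_pos hiA, h2]
    · simp [DFinsupp.filter_apply, hiA]
  rw [← hf, hzero, map_zero]

/-- Let `V` be a finite-dimensional complex vector space, `φ` an endomorphism,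
`t ≠ 0` not a root of unity.  If there is an invertible `ψ` with `ψ ∘ φ = t • (φ ∘ ψ)`, then
`V` splits as an internal direct sum of finitely many nonzero `ψ`-invariant subspaces
`W i` (`i ∈ ℤ`) with `φ (W i) ⊆ W (i-1)`. -/
theorem statement1 {V : Type*} [AddCommGroup V] [Module ℂ V] [FiniteDimensional ℂ V]
    (φ : Module.End ℂ V) (t : ℂ) (ht : t ≠ 0)
    (htru : ∀ n : ℕ, 0 < n → t ^ n ≠ 1)
    (ψ : V ≃ₗ[ℂ] V)
    (h : ψ.toLinearMap * φ = t • (φ * ψ.toLinearMap)) :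
    ∃ W : ℤ → Submodule ℂ V,
      {i : ℤ | W i ≠ ⊥}.Finite ∧
      (∀ i : ℤ, ∀ v ∈ W i, ψ v ∈ W i) ∧
      DirectSum.IsInternal W ∧
      (∀ i : ℤ, ∀ v ∈ W i, φ v ∈ W (i - 1)) := by
  classical
  set g : Module.End ℂ V := ψ.toLinearMap with hgdef
  -- Powers of `t` are "injective" in the exponent.
  have hzpow : ∀ k : ℤ, t ^ k = 1 → k = 0 := by
    intro k hk
    by_contra hk0
    have hn : t ^ (k.natAbs : ℕ) = 1 := by
      rcases Int.natAbs_eq k with h' | h'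
      · rw [← zpow_natCast, ← h', hk]
      · rw [← zpow_natCast, ← neg_neg (k.natAbs : ℤ), ← h', zpow_neg, hk, inv_one]
    exact htru k.natAbs (Int.natAbs_pos.mpr hk0) hn
  have tpow_inj : ∀ a b : ℤ, t ^ a = t ^ b → a = b := by
    intro a b hab
    have h1 : t ^ (a - b) = 1 := by
      rw [zpow_sub₀ ht, hab, div_self (zpow_ne_zero _ ht)]
    have := hzpow _ h1
    omega
  -- The setoid grouping eigenvalues into `t`-power classes.
  let s : Setoid ℂ :=
    ⟨fun μ ν => ∃ n : ℤ, ν = t ^ n * μ,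
      ⟨fun μ => ⟨0, by simp⟩,
       fun {μ ν} hμν => by
          obtain ⟨n, hn⟩ := hμν
          exact ⟨-n, by rw [hn, ← mul_assoc, ← zpow_add₀ ht, neg_add_cancel, zpow_zero, one_mul]⟩,
       fun {μ ν ρ} h1 h2 => by
          obtain ⟨n, hn⟩ := h1
          obtain ⟨m, hm⟩ := h2
          exact ⟨m + n, by rw [hm, hn, ← mul_assoc, ← zpow_add₀ ht]⟩⟩⟩
  have exF : ∀ μ : ℂ, ∃ n : ℤ, μ = t ^ n * (Quotient.mk s μ).out :=
    fun μ => Quotient.mk_out μ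
  set F : ℂ → ℤ := fun μ => (exF μ).choose with hFdef
  have hF : ∀ μ : ℂ, μ = t ^ (F μ) * (Quotient.mk s μ).out := fun μ => (exF μ).choose_spec
  have hFt : ∀ μ : ℂ, μ ≠ 0 → F (t * μ) = F μ + 1 := by
    intro μ hμ
    have hout : (Quotient.mk s (t * μ)).out = (Quotient.mk s μ).out := by
      have : Quotient.mk s μ = Quotient.mk s (t * μ) :=
        Quotient.sound ⟨1, by rw [zpow_one]⟩
      rw [← this]
    have hrep : (Quotient.mk s μ).out ≠ 0 := by
      intro h0
      apply hμ
      have := hF μ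
      rw [h0, mul_zero] at this
      exact this
    have h1 : t ^ (F (t * μ)) * (Quotient.mk s μ).out
        = t ^ (F μ + 1) * (Quotient.mk s μ).out := by
      rw [← hout, ← hF (t * μ), hout, zpow_add₀ ht, zpow_one, mul_comm (t ^ F μ) t, mul_assoc,
        ← hF μ]
    exact tpow_inj _ _ (mul_right_cancel₀ hrep h1)
  -- Generalized eigenspaces of ψ.
  set E : ℂ → Submodule ℂ V := fun μ => g.maxGenEigenspace μ with hEdef
  have hEind : iSupIndep E := Module.End.independent_maxGenEigenspace g
  have hEtop : ⨆ μ, E μ = ⊤ := Module.End.iSup_maxGenEigenspace_eq_top g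
  have hE0 : E 0 = ⊥ := by
    rw [eq_bot_iff]
    intro x hx
    obtain ⟨k, hk⟩ := (Module.End.mem_maxGenEigenspace _ _ _).mp hx
    simp only [zero_smul, sub_zero] at hk
    have hinj : Function.Injective (g ^ k) := by
      have hco : ⇑(g ^ k) = (⇑ψ)^[k] := by
        rw [hgdef]; ext x; simp [Module.End.pow_apply]
      rw [hco]
      exact ψ.injective.iterate k
    have : x = 0 := hinj (by simpa using hk)
    simp [this]
  -- ψ preserves each generalized eigenspace.
  have hψE : ∀ μ : ℂ, ∀ x ∈ E μ, g x ∈ E μ := fun μ x hx =>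
    Module.End.mapsTo_maxGenEigenspace_of_comm (Commute.refl g) μ hx
  -- φ maps the μ-eigenspace into the t*μ-eigenspace.
  have key : ∀ (μ : ℂ) (k : ℕ),
      (g - (t * μ) • 1) ^ k * φ = t ^ k • (φ * (g - μ • 1) ^ k) := by
    intro μ k
    have base : (g - (t * μ) • 1) * φ = t • (φ * (g - μ • 1)) := by
      rw [sub_mul, mul_sub, smul_sub, h, smul_mul_assoc, one_mul, mul_smul_comm, mul_one,
        smul_smul]
    induction k with
    | zero => simp
    | succ k ih =>
      calc (g - (t * μ) • 1) ^ (k + 1) * φ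
          = (g - (t * μ) • 1) ^ k * ((g - (t * μ) • 1) * φ) := by rw [pow_succ, mul_assoc]
        _ = (g - (t * μ) • 1) ^ k * (t • (φ * (g - μ • 1))) := by rw [base]
        _ = t • ((g - (t * μ) • 1) ^ k * φ * (g - μ • 1)) := by
            rw [mul_smul_comm, mul_assoc]
        _ = t • ((t ^ k • (φ * (g - μ • 1) ^ k)) * (g - μ • 1)) := by rw [ih]
        _ = t ^ (k + 1) • (φ * (g - μ • 1) ^ (k + 1)) := by
            rw [smul_mul_assoc, smul_smul, ← pow_succ', mul_assoc, ← pow_succ]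
  have hφE : ∀ μ : ℂ, ∀ x ∈ E μ, φ x ∈ E (t * μ) := by
    intro μ x hx
    obtain ⟨k, hk⟩ := (Module.End.mem_maxGenEigenspace _ _ _).mp hx
    refine (Module.End.mem_maxGenEigenspace _ _ _).mpr ⟨k, ?_⟩
    have h2 := congrArg (fun (f : Module.End ℂ V) => f x) (key μ k)
    simp only [Module.End.mul_apply, LinearMap.smul_apply] at h2
    rw [h2, hk, map_zero, smul_zero]
  -- The desired family.
  set W : ℤ → Submodule ℂ V := fun i => ⨆ (μ : ℂ) (_ : F μ = -i), E μ with hWdef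
  have hEleW : ∀ (μ : ℂ) (i : ℤ), F μ = -i → E μ ≤ W i := by
    intro μ i hμ
    exact le_iSup₂ (f := fun (ν : ℂ) (_ : F ν = -i) => E ν) μ hμ
  refine ⟨W, ?_, ?_, ?_, ?_⟩
  · -- finiteness
    have hEfin : {μ : ℂ | E μ ≠ ⊥}.Finite :=
      WellFoundedGT.finite_ne_bot_of_iSupIndep hEind
    apply Set.Finite.subset (hEfin.image (fun μ => -F μ))
    intro i hi
    simp only [Set.mem_setOf_eq] at hi
    by_contra hnot
    apply hi
    rw [eq_bot_iff]
    refine iSup₂_le fun μ hμ => ?_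
    have hEμ : E μ = ⊥ := by
      by_contra hne
      exact hnot ⟨μ, hne, by show -F μ = i; rw [hμ, neg_neg]⟩
    rw [hEμ]
  · -- ψ-invariance
    intro i v hv
    have hle : W i ≤ Submodule.comap g (W i) := by
      refine iSup₂_le fun μ hμ => ?_
      intro x hx
      exact hEleW μ i hμ (hψE μ x hx)
    exact hle hv
  · -- internal direct sum
    have hsup : ⨆ i, W i = ⊤ := by
      rw [eq_top_iff, ← hEtop]
      refine iSup_le fun μ => ?_
      exact le_trans (hEleW μ (-F μ) (by rw [neg_neg])) (le_iSup W (-F μ))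
    have hind : iSupIndep W := by
      rw [iSupIndep_def]
      intro i
      have h2 : (⨆ j, ⨆ _ : j ≠ i, W j) ≤ ⨆ μ ∈ {μ : ℂ | F μ ≠ -i}, E μ := by
        refine iSup₂_le fun j hj => iSup₂_le fun μ hμ => ?_
        refine le_iSup₂ (f := fun (ν : ℂ) (_ : ν ∈ {μ : ℂ | F μ ≠ -i}) => E ν) μ ?_
        intro hcon
        exact hj (by omega : j = i)
      have h1 : Disjoint (⨆ μ ∈ {μ : ℂ | F μ = -i}, E μ) (⨆ μ ∈ {μ : ℂ | F μ ≠ -i}, E μ) :=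
        block_disjoint hEind _ _ (fun μ hμA hμB => hμB hμA)
      exact (h1.mono_right h2)
    exact DirectSum.isInternal_submodule_of_iSupIndep_of_iSup_eq_top hind hsup
  · -- φ shifts the grading down by one
    intro i v hv
    have hle : W i ≤ Submodule.comap φ (W (i - 1)) := by
      refine iSup₂_le fun μ hμ => ?_
      intro x hx
      by_cases hμ0 : μ = 0
      · rw [hμ0, hE0] at hx
        simp only [Submodule.mem_bot] at hx
        simp [hx]
      · have hFtμ : F (t * μ) = -(i - 1) := by
          rw [hFt μ hμ0, hμ]; ring
        exact hEleW (t * μ) (i - 1) hFtμ (hφE μ x hx)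
    exact hle hv
end

section
/- Let V be a finite-dimensional complex vector space, φ a linear endomorphism of V, and t a nonzero complex number which is not a root of unity. If there exists an invertible linear endomorphism ψ of V with ψ ∘ φ = t · (φ ∘ ψ), then φ is nilpotent. -/
/-- Let `V` be a finite-dimensional complex vector space, `φ` an endomorphism,
and `t ≠ 0` not a root of unity.  If there exists an invertible endomorphism `ψ` with
`ψ ∘ φ = t • (φ ∘ ψ)`, then `φ` is nilpotent. -/
theorem statement2 {V : Type*} [AddCommGroup V] [Module ℂ V] [FiniteDimensional ℂ V]
    (φ : Module.End ℂ V) (t : ℂ) (ht : t ≠ 0)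
    (htru : ∀ n : ℕ, 0 < n → t ^ n ≠ 1)
    (h : ∃ ψ : V ≃ₗ[ℂ] V, ψ.toLinearMap * φ = t • (φ * ψ.toLinearMap)) :
    IsNilpotent φ := by
  obtain ⟨ψ, hψ⟩ := h
  -- eigenvalues scale by t⁻¹
  have key : ∀ μ : ℂ, φ.HasEigenvalue μ → φ.HasEigenvalue (t⁻¹ * μ) := by
    intro μ hμ
    obtain ⟨v, hv, hv0⟩ := hμ.exists_hasEigenvector
    refine Module.End.hasEigenvalue_of_hasEigenvector (x := ψ v) ⟨?_, fun hc => hv0 (by simpa using hc)⟩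
    have hv' : φ v = μ • v := Module.End.mem_eigenspace_iff.mp hv
    have h1 : ψ (φ v) = t • φ (ψ v) := by
      have := congrArg (fun f : Module.End ℂ V => f v) hψ
      simpa using this
    rw [hv'] at h1
    have h1' : μ • ψ v = t • φ (ψ v) := (map_smul ψ μ v).symm.trans h1
    have heig : φ (ψ v) = t⁻¹ • μ • ψ v := by
      rw [h1', smul_smul, inv_mul_cancel₀ ht, one_smul]
    show ψ v ∈ Module.End.eigenspace φ (t⁻¹ * μ)
    rw [Module.End.mem_eigenspace_iff, heig, smul_smul]
  have key2 : ∀ (n : ℕ) (μ : ℂ), φ.HasEigenvalue μ → φ.HasEigenvalue (t⁻¹ ^ n * μ) := by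
    intro n
    induction n with
    | zero => intro μ hμ; simpa using hμ
    | succ k ih =>
      intro μ hμ
      have := key _ (ih μ hμ)
      rw [← mul_assoc, ← pow_succ'] at this
      exact this
  -- all eigenvalues are zero
  have hzero : ∀ μ : ℂ, φ.HasEigenvalue μ → μ = 0 := by
    intro μ hμ
    by_contra hμ0
    have hfin : Set.Finite (spectrum ℂ φ) := Module.End.finite_spectrum φ
    have hlem : ∀ a b : ℕ, a < b → t ^ a = t ^ b → False := by
      intro a b hlt he
      apply htru (b - a) (Nat.sub_pos_of_lt hlt)
      have h2 : t ^ a * t ^ (b - a) = t ^ a * 1 := by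
        rw [← pow_add, mul_one, he]
        congr 1
        omega
      exact mul_left_cancel₀ (pow_ne_zero a ht) h2
    have hinj : Function.Injective (fun n : ℕ => t⁻¹ ^ n * μ) := by
      intro a b hab
      simp only at hab
      have hab' : t⁻¹ ^ a = t⁻¹ ^ b := mul_right_cancel₀ hμ0 hab
      have hab2 : t ^ a = t ^ b := by
        have := congrArg (·⁻¹) hab'
        simpa [← inv_pow] using this
      rcases lt_trichotomy a b with hlt | heq | hlt
      · exact absurd hab2 (fun he => hlem a b hlt he)
      · exact heq
      · exact absurd hab2.symm (fun he => hlem b a hlt he)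
    have hsub : Set.range (fun n : ℕ => t⁻¹ ^ n * μ) ⊆ spectrum ℂ φ := by
      rintro x ⟨n, rfl⟩
      exact (key2 n μ hμ).mem_spectrum
    have : Set.Finite (Set.range (fun n : ℕ => t⁻¹ ^ n * μ)) := hfin.subset hsub
    exact (Set.infinite_range_of_injective hinj) this
  -- minpoly has only 0 as root, so minpoly = X ^ d, hence nilpotent
  have hint : IsIntegral ℂ φ := Algebra.IsIntegral.isIntegral φ
  have hmonic : (minpoly ℂ φ).Monic := minpoly.monic hint
  have hsplits : (minpoly ℂ φ).Splits := IsAlgClosed.splits _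
  have hroots : ∀ a ∈ (minpoly ℂ φ).roots, a = 0 := by
    intro a ha
    exact hzero a ((Module.End.hasEigenvalue_iff_isRoot).mpr ((Polynomial.isRoot_of_mem_roots ha)))
  have hrepl : (minpoly ℂ φ).roots = Multiset.replicate (Multiset.card (minpoly ℂ φ).roots) 0 :=
    Multiset.eq_replicate.mpr ⟨rfl, hroots⟩
  have heq : minpoly ℂ φ = Polynomial.X ^ Multiset.card (minpoly ℂ φ).roots := by
    have := Polynomial.Splits.eq_prod_roots_of_monic hsplits hmonic
    rw [hrepl] at this
    simpa [Multiset.map_replicate, Multiset.prod_replicate] using this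
  refine ⟨Multiset.card (minpoly ℂ φ).roots, ?_⟩
  have := minpoly.aeval ℂ φ
  rw [heq] at this
  simpa using this
end

section
/- Let V be a finite-dimensional complex vector space and φ a linear endomorphism of V. Suppose there exist a nonzero complex number t which is not a root of unity and an invertible linear endomorphism ψ of V with ψ ∘ φ ∘ ψ⁻¹ = t·φ. Then there exists a group homomorphism Ψ : ℂˣ → GL(V) such that Ψ(s) ∘ φ ∘ Ψ(s)⁻¹ = s·φ for every s ∈ ℂˣ; moreover Ψ can be chosen so that V admits a direct sum decomposition V = ⨁_{i∈ℤ} W_i (all but finitely many W_i zero) on which Ψ(s) acts on W_i as multiplication by s^i. -/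
open DirectSum

noncomputable def psiAux {V : Type*} [AddCommGroup V] [Module ℂ V]
    (W : ℤ → Submodule ℂ V) (hint : DirectSum.IsInternal W) (s : ℂ) : Module.End ℂ V :=
  (DirectSum.toModule ℂ ℤ V fun i => (s ^ i) • (W i).subtype) ∘ₗ
    (LinearEquiv.ofBijective (DirectSum.coeLinearMap W) hint).symm.toLinearMap

theorem psiAux_apply {V : Type*} [AddCommGroup V] [Module ℂ V]
    (W : ℤ → Submodule ℂ V) (hint : DirectSum.IsInternal W) (s : ℂ)
    {i : ℤ} {v : V} (hv : v ∈ W i) :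
    psiAux W hint s v = s ^ i • v := by
  have h1 : (LinearEquiv.ofBijective (DirectSum.coeLinearMap W) hint).symm v
      = DirectSum.lof ℂ ℤ (fun i => W i) i ⟨v, hv⟩ := by
    rw [LinearEquiv.symm_apply_eq]
    show v = DirectSum.coeLinearMap W (DirectSum.lof ℂ ℤ (fun i => W i) i ⟨v, hv⟩)
    rw [DirectSum.lof_eq_of,
      DirectSum.coeLinearMap_of]
  show (DirectSum.toModule ℂ ℤ V fun i => (s ^ i) • (W i).subtype)
      ((LinearEquiv.ofBijective (DirectSum.coeLinearMap W) hint).symm v) = _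
  rw [h1, DirectSum.toModule_lof]
  rfl

theorem ext_aux {V : Type*} [AddCommGroup V] [Module ℂ V]
    (W : ℤ → Submodule ℂ V) (hsup : ⨆ i, W i = ⊤) {f g : Module.End ℂ V}
    (hfg : ∀ (i : ℤ), ∀ v ∈ W i, f v = g v) : f = g := by
  ext v
  have hv : v ∈ ⨆ i, W i := hsup ▸ Submodule.mem_top
  refine Submodule.iSup_induction (motive := fun x => f x = g x) W hv hfg (by simp) ?_
  intro x y hx hy
  simp [map_add, hx, hy]

theorem psiAux_mul {V : Type*} [AddCommGroup V] [Module ℂ V]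
    (W : ℤ → Submodule ℂ V) (hint : DirectSum.IsInternal W) (s s' : ℂ) :
    psiAux W hint (s * s') = psiAux W hint s * psiAux W hint s' := by
  refine ext_aux W hint.submodule_iSup_eq_top ?_
  intro i v hv
  have h1 : psiAux W hint s' v = s' ^ i • v := psiAux_apply W hint s' hv
  have h2 : s' ^ i • v ∈ W i := Submodule.smul_mem _ _ hv
  rw [psiAux_apply W hint _ hv, Module.End.mul_apply, h1, psiAux_apply W hint s h2,
    mul_zpow, mul_smul]

theorem psiAux_one {V : Type*} [AddCommGroup V] [Module ℂ V]
    (W : ℤ → Submodule ℂ V) (hint : DirectSum.IsInternal W) :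
    psiAux W hint 1 = 1 := by
  refine ext_aux W hint.submodule_iSup_eq_top ?_
  intro i v hv
  rw [psiAux_apply W hint _ hv, one_zpow, one_smul, Module.End.one_apply]

theorem aux {V : Type*} [AddCommGroup V] [Module ℂ V]
    (φ : Module.End ℂ V) (W : ℤ → Submodule ℂ V) (hint : DirectSum.IsInternal W)
    (hfin : {i : ℤ | W i ≠ ⊥}.Finite)
    (hmap : ∀ i : ℤ, ∀ v ∈ W i, φ v ∈ W (i + 1)) :
    ∃ Ψ : ℂˣ →* (Module.End ℂ V)ˣ,
      (∀ s : ℂˣ, (Ψ s : Module.End ℂ V) * φ * (((Ψ s)⁻¹ : (Module.End ℂ V)ˣ) : Module.End ℂ V)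
        = (s : ℂ) • φ) ∧
      ∃ W' : ℤ → Submodule ℂ V,
        {i : ℤ | W' i ≠ ⊥}.Finite ∧
        DirectSum.IsInternal W' ∧
        ∀ (s : ℂˣ) (i : ℤ), ∀ v ∈ W' i, (Ψ s : Module.End ℂ V) v = ((s : ℂ) ^ i) • v := by
  have hsup := hint.submodule_iSup_eq_top
  have hmulinv : ∀ s : ℂˣ, psiAux W hint s * psiAux W hint ((s⁻¹ : ℂˣ) : ℂ) = 1 := by
    intro s
    rw [← psiAux_mul, ← Units.val_mul, mul_inv_cancel, Units.val_one, psiAux_one]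
  have hinvmul : ∀ s : ℂˣ, psiAux W hint ((s⁻¹ : ℂˣ) : ℂ) * psiAux W hint s = 1 := by
    intro s
    rw [← psiAux_mul, ← Units.val_mul, inv_mul_cancel, Units.val_one, psiAux_one]
  refine ⟨MonoidHom.mk'
      (fun s => ⟨psiAux W hint s, psiAux W hint ((s⁻¹ : ℂˣ) : ℂ), hmulinv s, hinvmul s⟩)
      (fun a b => by
        apply Units.ext
        show psiAux W hint ((a * b : ℂˣ) : ℂ) = psiAux W hint a * psiAux W hint b
        rw [Units.val_mul, psiAux_mul]), ?_, W, hfin, hint, ?_⟩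
  · intro s
    have H : psiAux W hint s * φ = ((s : ℂ) • φ) * psiAux W hint s := by
      refine ext_aux W hsup ?_
      intro i v hv
      have h1 : φ v ∈ W (i + 1) := hmap i v hv
      rw [Module.End.mul_apply, psiAux_apply W hint _ h1, Module.End.mul_apply,
        psiAux_apply W hint _ hv, map_smul, LinearMap.smul_apply,
        zpow_add_one₀ s.ne_zero, mul_comm, mul_smul]
      exact smul_comm _ _ _
    show psiAux W hint s * φ * psiAux W hint ((s⁻¹ : ℂˣ) : ℂ) = (s : ℂ) • φ
    rw [H, mul_assoc, hmulinv s, mul_one]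
  · intro s i v hv
    exact psiAux_apply W hint _ hv



set_option maxHeartbeats 1000000 in
/-- Let `V` be a finite-dimensional complex vector space and `φ` an endomorphism.
Suppose there are `t ≠ 0` not a root of unity and an invertible `ψ` with `ψ ∘ φ ∘ ψ⁻¹ = t • φ`.
Then there is a group homomorphism `Ψ : ℂˣ → GL(V)` with `Ψ s ∘ φ ∘ (Ψ s)⁻¹ = s • φ` for all
`s`, which moreover can be chosen so that `V = ⨁_{i ∈ ℤ} W i` (all but finitely many `W i`
zero) with `Ψ s` acting on `W i` as multiplication by `s ^ i`. -/
theorem statement3 {V : Type*} [AddCommGroup V] [Module ℂ V] [FiniteDimensional ℂ V]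
    (φ : Module.End ℂ V) (t : ℂ) (ht : t ≠ 0)
    (htru : ∀ n : ℕ, 0 < n → t ^ n ≠ 1)
    (ψ : (Module.End ℂ V)ˣ)
    (h : (ψ : Module.End ℂ V) * φ * ((ψ⁻¹ : (Module.End ℂ V)ˣ) : Module.End ℂ V) = t • φ) :
    ∃ Ψ : ℂˣ →* (Module.End ℂ V)ˣ,
      (∀ s : ℂˣ, (Ψ s : Module.End ℂ V) * φ * (((Ψ s)⁻¹ : (Module.End ℂ V)ˣ) : Module.End ℂ V)
        = (s : ℂ) • φ) ∧
      ∃ W : ℤ → Submodule ℂ V,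
        {i : ℤ | W i ≠ ⊥}.Finite ∧
        DirectSum.IsInternal W ∧
        ∀ (s : ℂˣ) (i : ℤ), ∀ v ∈ W i, (Ψ s : Module.End ℂ V) v = ((s : ℂ) ^ i) • v := by
  classical
  set g : Module.End ℂ V := (ψ : Module.End ℂ V) with hgdef
  -- the basic commutation relation
  have hcomm : g * φ = t • (φ * g) := by
    have h2 : g * φ * ((ψ⁻¹ : (Module.End ℂ V)ˣ) : Module.End ℂ V) * g = (t • φ) * g := by
      rw [h]
    rwa [mul_assoc (g * φ), Units.inv_mul, mul_one, smul_mul_assoc] at h2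
  -- commutation with powers of (g - λ•1)
  have hpow : ∀ (μ : ℂ) (k : ℕ),
      (g - (t * μ) • 1) ^ k * φ = t ^ k • (φ * (g - μ • 1) ^ k) := by
    intro μ k
    have hone : (g - (t * μ) • 1) * φ = t • (φ * (g - μ • 1)) := by
      rw [sub_mul, smul_mul_assoc, one_mul, hcomm, mul_sub, mul_smul_comm, smul_sub,
        smul_smul, mul_one]
    induction k with
    | zero => simp
    | succ k ih =>
      calc (g - (t * μ) • 1) ^ (k + 1) * φ
          = (g - (t * μ) • 1) ^ k * ((g - (t * μ) • 1) * φ) := by rw [pow_succ, mul_assoc]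
        _ = (g - (t * μ) • 1) ^ k * (t • (φ * (g - μ • 1))) := by rw [hone]
        _ = t • ((g - (t * μ) • 1) ^ k * φ * (g - μ • 1)) := by rw [mul_smul_comm, mul_assoc]
        _ = t • (t ^ k • (φ * (g - μ • 1) ^ k) * (g - μ • 1)) := by rw [ih]
        _ = t ^ (k + 1) • (φ * (g - μ • 1) ^ (k + 1)) := by
            rw [smul_mul_assoc, smul_smul, mul_assoc, ← pow_succ, ← pow_succ']
  -- φ maps generalized eigenspaces of g to generalized eigenspaces
  have hmapsto : ∀ (μ : ℂ), ∀ v ∈ g.maxGenEigenspace μ, φ v ∈ g.maxGenEigenspace (t * μ) := by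
    intro μ v hv
    rw [Module.End.mem_maxGenEigenspace] at hv ⊢
    obtain ⟨k, hk⟩ := hv
    refine ⟨k, ?_⟩
    rw [← Module.End.mul_apply, hpow μ k, LinearMap.smul_apply, Module.End.mul_apply, hk,
      map_zero, smul_zero]
  set S : Set ℂ := {μ | g.maxGenEigenspace μ ≠ ⊥} with hSdef
  have hindep : iSupIndep g.maxGenEigenspace := g.independent_maxGenEigenspace
  have hSfin : S.Finite := WellFoundedGT.finite_ne_bot_of_iSupIndep hindep
  have hEbot : ∀ μ, μ ∉ S → g.maxGenEigenspace μ = ⊥ := fun μ hμ => not_not.mp hμ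
  -- 0 is not an eigenvalue of the invertible g
  have h0S : (0 : ℂ) ∉ S := by
    intro h0
    apply h0
    rw [eq_bot_iff]
    intro v hv
    rw [Module.End.mem_maxGenEigenspace] at hv
    obtain ⟨k, hk⟩ := hv
    rw [zero_smul, sub_zero] at hk
    have hgk : ((ψ ^ k : (Module.End ℂ V)ˣ) : Module.End ℂ V) = g ^ k :=
      Units.val_pow_eq_pow_val ψ k
    have h1 : (((ψ ^ k)⁻¹ : (Module.End ℂ V)ˣ) : Module.End ℂ V) * g ^ k = 1 := by
      rw [← hgk]; exact Units.inv_mul _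
    have h2 := congrArg (fun f : Module.End ℂ V => f v) h1
    simp only [Module.End.mul_apply, Module.End.one_apply] at h2
    rw [hk, map_zero] at h2
    simp [← h2]
  have hne0 : ∀ μ ∈ S, μ ≠ 0 := fun μ hμ h0 => h0S (h0 ▸ hμ)
  -- integer powers of t are never 1 (except t^0)
  have hzpow : ∀ k : ℤ, t ^ k = 1 → k = 0 := by
    intro k hk
    rcases lt_trichotomy k 0 with hlt | heq | hgt
    · exfalso
      have h2 : t ^ (-k) = 1 := by rw [zpow_neg, hk, inv_one]
      have h3 : t ^ (-k).toNat = 1 := by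
        rw [← zpow_natCast, Int.toNat_of_nonneg (by omega)]; exact h2
      exact htru _ (by omega) h3
    · exact heq
    · exfalso
      have h3 : t ^ k.toNat = 1 := by
        rw [← zpow_natCast, Int.toNat_of_nonneg (by omega)]; exact hk
      exact htru _ (by omega) h3
  have htinj : ∀ (μ : ℂ), μ ≠ 0 → ∀ m n : ℤ, t ^ m * μ = t ^ n * μ → m = n := by
    intro μ hμ m n hmn
    have h1 : t ^ m = t ^ n := mul_right_cancel₀ hμ hmn
    have h2 : t ^ (m - n) = 1 := by rw [zpow_sub₀ ht, h1, div_self (zpow_ne_zero _ ht)]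
    have := hzpow _ h2
    omega
  set u : ℂ := t⁻¹ with hudef
  have hu : u ≠ 0 := inv_ne_zero ht
  have hut : u * t = 1 := inv_mul_cancel₀ ht
  have hupow : ∀ (j : ℕ) (μ : ℂ), u ^ j * μ = t ^ (-(j : ℤ)) * μ := by
    intro j μ
    rw [hudef, zpow_neg, zpow_natCast, inv_pow]
  set N : ℕ := hSfin.toFinset.card with hNdef
  -- if a backwards chain of length n stays in S, then n < N
  have hbound : ∀ (μ : ℂ) (n : ℕ), (∀ j ≤ n, u ^ j * μ ∈ S) → n < N := by
    intro μ n hP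
    have hμS : μ ∈ S := by simpa using hP 0 (Nat.zero_le n)
    have hμ0 : μ ≠ 0 := hne0 μ hμS
    have hcard : (Finset.range (n + 1)).card ≤ hSfin.toFinset.card := by
      refine Finset.card_le_card_of_injOn (fun j => u ^ j * μ) ?_ ?_
      · intro j hj
        rw [Finset.mem_coe, Set.Finite.mem_toFinset]
        exact hP j (by simpa using Nat.lt_succ_iff.mp (Finset.mem_range.mp hj))
      · intro j1 _ j2 _ hj
        have := htinj μ hμ0 (-(j1 : ℤ)) (-(j2 : ℤ)) (by rw [← hupow, ← hupow]; exact hj)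
        omega
    rw [Finset.card_range] at hcard
    omega
  set b : ℂ → ℕ := fun μ => Nat.findGreatest (fun n => ∀ j ≤ n, u ^ j * μ ∈ S) N with hbdef
  have hbP : ∀ μ ∈ S, ∀ j ≤ b μ, u ^ j * μ ∈ S := by
    intro μ hμ
    have h0 : ∀ j ≤ 0, u ^ j * μ ∈ S := by
      intro j hj
      have hj0 : j = 0 := Nat.le_zero.mp hj
      subst hj0; simpa using hμ
    exact Nat.findGreatest_spec (P := fun n => ∀ j ≤ n, u ^ j * μ ∈ S) (Nat.zero_le N) h0
  have hblt : ∀ μ ∈ S, b μ < N := fun μ hμ => hbound μ _ (hbP μ hμ)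
  have hshift : ∀ (j : ℕ) (μ : ℂ), u ^ (j + 1) * (t * μ) = u ^ j * μ := by
    intro j μ
    linear_combination (u ^ j * μ) * hut
  have hbsucc : ∀ μ ∈ S, t * μ ∈ S → b (t * μ) = b μ + 1 := by
    intro μ hμ htμ
    have hP1 : ∀ j ≤ b μ + 1, u ^ j * (t * μ) ∈ S := by
      intro j hj
      cases j with
      | zero => simpa using htμ
      | succ j' =>
        rw [hshift]
        exact hbP μ hμ j' (by omega)
    have hle : b μ + 1 ≤ b (t * μ) :=
      Nat.le_findGreatest (P := fun n => ∀ j ≤ n, u ^ j * (t * μ) ∈ S)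
        (by have := hbound _ _ hP1; omega) hP1
    have hge : b (t * μ) ≤ b μ + 1 := by
      by_contra hc
      push_neg at hc
      have hPm : ∀ j ≤ b (t * μ) - 1, u ^ j * μ ∈ S := by
        intro j hj
        rw [← hshift j μ]
        exact hbP (t * μ) htμ (j + 1) (by omega)
      have h6 : b (t * μ) - 1 ≤ b μ :=
        Nat.le_findGreatest (P := fun n => ∀ j ≤ n, u ^ j * μ ∈ S)
          (by have := hbound _ _ hPm; omega) hPm
      omega
    omega
  set r : ℂ → ℂ := fun μ => u ^ (b μ) * μ with hrdef
  have hrS : ∀ μ ∈ S, r μ ∈ S := fun μ hμ => hbP μ hμ (b μ) le_rfl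
  have hrsucc : ∀ μ ∈ S, t * μ ∈ S → r (t * μ) = r μ := by
    intro μ hμ htμ
    show u ^ (b (t * μ)) * (t * μ) = u ^ (b μ) * μ
    rw [hbsucc μ hμ htμ, hshift]
  set l : List ℂ := hSfin.toFinset.toList with hldef
  have hmeml : ∀ μ ∈ S, μ ∈ l := by
    intro μ hμ
    rw [hldef, Finset.mem_toList, Set.Finite.mem_toFinset]
    exact hμ
  have hcinj : ∀ μ ∈ S, ∀ ν ∈ S, List.idxOf μ l = List.idxOf ν l → μ = ν := by
    intro μ hμ ν hν hidx
    exact (List.idxOf_inj (hmeml μ hμ) (y := ν)).mp hidx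
  set D : ℂ → ℤ := fun μ => (b μ : ℤ) + (N : ℤ) * (List.idxOf (r μ) l : ℤ) with hDdef
  have hDsucc : ∀ μ ∈ S, t * μ ∈ S → D (t * μ) = D μ + 1 := by
    intro μ hμ htμ
    show (b (t * μ) : ℤ) + (N : ℤ) * (List.idxOf (r (t * μ)) l : ℤ) = _
    rw [hbsucc μ hμ htμ, hrsucc μ hμ htμ]
    push_cast
    ring
  have hDinj : ∀ μ ∈ S, ∀ ν ∈ S, D μ = D ν → μ = ν := by
    intro μ hμ ν hν hD
    have h1 : b μ < N := hblt μ hμ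
    have h2 : b ν < N := hblt ν hν
    have hDD : (b μ : ℤ) + (N : ℤ) * (List.idxOf (r μ) l : ℤ)
        = (b ν : ℤ) + (N : ℤ) * (List.idxOf (r ν) l : ℤ) := hD
    have key : ∀ x y bx by' : ℤ, 0 ≤ bx → bx < N → 0 ≤ by' → by' < N →
        bx + N * x = by' + N * y → x = y ∧ bx = by' := by
      intro x y bx by' k1 k2 k3 k4 k5
      rcases lt_trichotomy x y with hlt | heq | hgt
      · exfalso
        nlinarith [mul_le_mul_of_nonneg_left (show (1:ℤ) ≤ y - x by omega)
          (Int.natCast_nonneg N)]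
      · exact ⟨heq, by subst heq; linarith [k5]⟩
      · exfalso
        nlinarith [mul_le_mul_of_nonneg_left (show (1:ℤ) ≤ x - y by omega)
          (Int.natCast_nonneg N)]
    obtain ⟨kx, kb⟩ := key (List.idxOf (r μ) l : ℤ) (List.idxOf (r ν) l : ℤ)
      (b μ : ℤ) (b ν : ℤ) (Int.natCast_nonneg _) (by exact_mod_cast h1) (Int.natCast_nonneg _)
      (by exact_mod_cast h2) hDD
    have hbb : b μ = b ν ∧ List.idxOf (r μ) l = List.idxOf (r ν) l :=
      ⟨by exact_mod_cast kb, by exact_mod_cast kx⟩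
    have hr : r μ = r ν := hcinj _ (hrS μ hμ) _ (hrS ν hν) hbb.2
    have hr2 : u ^ (b μ) * μ = u ^ (b μ) * ν := by
      have h3 : u ^ (b μ) * μ = u ^ (b ν) * ν := hr
      rwa [← hbb.1] at h3
    exact mul_left_cancel₀ (pow_ne_zero _ hu) hr2
  -- the grading
  set W : ℤ → Submodule ℂ V := fun i =>
    if hex : ∃ μ, μ ∈ S ∧ D μ = i then g.maxGenEigenspace hex.choose else ⊥ with hWdef
  have hWD : ∀ μ ∈ S, W (D μ) = g.maxGenEigenspace μ := by
    intro μ hμ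
    have hex : ∃ ν, ν ∈ S ∧ D ν = D μ := ⟨μ, hμ, rfl⟩
    show (if hex : ∃ ν, ν ∈ S ∧ D ν = D μ then g.maxGenEigenspace hex.choose else ⊥) = _
    rw [dif_pos hex]
    congr 1
    exact hDinj _ hex.choose_spec.1 _ hμ hex.choose_spec.2
  have hWbot : ∀ i : ℤ, (¬ ∃ μ, μ ∈ S ∧ D μ = i) → W i = ⊥ := by
    intro i hex
    show (if hex : ∃ μ, μ ∈ S ∧ D μ = i then g.maxGenEigenspace hex.choose else ⊥) = ⊥
    rw [dif_neg hex]
  have hfinW : {i : ℤ | W i ≠ ⊥}.Finite := by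
    refine (hSfin.image D).subset ?_
    intro i hi
    by_cases hex : ∃ μ, μ ∈ S ∧ D μ = i
    · exact ⟨hex.choose, hex.choose_spec.1, hex.choose_spec.2⟩
    · exact absurd (hWbot i hex) hi
  have hindepW : iSupIndep W := by
    rw [← iSupIndep_ne_bot]
    have hchoice : ∀ i : {i : ℤ // W i ≠ ⊥}, ∃ μ, μ ∈ S ∧ D μ = (i : ℤ) := by
      intro i
      by_contra hex
      exact i.2 (hWbot _ hex)
    choose m hmS hmD using hchoice
    have hWm : ∀ i : {i : ℤ // W i ≠ ⊥}, W (i : ℤ) = g.maxGenEigenspace (m i) := by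
      intro i
      have hex : ∃ μ, μ ∈ S ∧ D μ = (i : ℤ) := ⟨m i, hmS i, hmD i⟩
      show (if hex : ∃ μ, μ ∈ S ∧ D μ = (i : ℤ) then g.maxGenEigenspace hex.choose else ⊥) = _
      rw [dif_pos hex]
      congr 1
      exact hDinj _ hex.choose_spec.1 _ (hmS i) (by rw [hex.choose_spec.2, hmD i])
    have hminj : Function.Injective m := by
      intro i j hij
      have : (i : ℤ) = (j : ℤ) := by rw [← hmD i, ← hmD j, hij]
      exact Subtype.ext this
    have hcomp := hindep.comp hminj
    have : (fun i : {i : ℤ // W i ≠ ⊥} => W (i : ℤ)) = g.maxGenEigenspace ∘ m := by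
      funext i
      exact hWm i
    rw [this]
    exact hcomp
  have hsupW : ⨆ i, W i = ⊤ := by
    apply le_antisymm le_top
    rw [← Module.End.iSup_maxGenEigenspace_eq_top g]
    apply iSup_le
    intro μ
    by_cases hμ : μ ∈ S
    · rw [← hWD μ hμ]
      exact le_iSup W (D μ)
    · rw [hEbot μ hμ]
      exact bot_le
  have hmapW : ∀ i : ℤ, ∀ v ∈ W i, φ v ∈ W (i + 1) := by
    intro i v hv
    by_cases hex : ∃ μ, μ ∈ S ∧ D μ = i
    · have hμS := hex.choose_spec.1
      have hμD := hex.choose_spec.2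
      have hWi : W i = g.maxGenEigenspace hex.choose := by
        show (if hex : ∃ μ, μ ∈ S ∧ D μ = i then g.maxGenEigenspace hex.choose else ⊥) = _
        rw [dif_pos hex]
      have hvE : v ∈ g.maxGenEigenspace hex.choose := by rwa [hWi] at hv
      have hφ : φ v ∈ g.maxGenEigenspace (t * hex.choose) := hmapsto _ v hvE
      by_cases htμ : t * hex.choose ∈ S
      · have h5 : D (t * hex.choose) = i + 1 := by rw [hDsucc _ hμS htμ, hμD]
        rw [← h5, hWD _ htμ]
        exact hφ
      · rw [hEbot _ htμ, Submodule.mem_bot] at hφ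
        rw [hφ]
        exact Submodule.zero_mem _
    · rw [hWbot i hex, Submodule.mem_bot] at hv
      rw [hv, map_zero]
      exact Submodule.zero_mem _
  exact aux φ W (DirectSum.isInternal_submodule_of_iSupIndep_of_iSup_eq_top hindepW hsupW)
    hfinW hmapW
end

section
/- Let g ≥ 1 be an integer, let φ be a nonzero traceless 2×2 complex matrix, and let A₁,…,A_g, B₁,…,B_g be traceless 2×2 complex matrices. Then the following are equivalent: (i) for every traceless 2×2 complex matrix a and every index i one has trace(φ·(a·B_i − B_i·a)) = 0 and trace(φ·(A_i·a − a·A_i)) = 0, and for every traceless 2×2 complex matrix ψ one has trace(ψ·Σ_{i=1}^{g}(A_i·B_i − B_i·A_i)) = 0; (ii) every A_i and every B_i is a complex scalar multiple of φ. -/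
lemma keytr (X Y a : Matrix (Fin 2) (Fin 2) ℂ) :
    (X * (a * Y)).trace = (Y * X * a).trace := by
  rw [← mul_assoc, Matrix.trace_mul_comm, ← mul_assoc]

lemma aux1 (X : Matrix (Fin 2) (Fin 2) ℂ) (hX : X.trace = 0)
    (h : ∀ a : Matrix (Fin 2) (Fin 2) ℂ, a.trace = 0 → (X * a).trace = 0) : X = 0 := by
  have h1 := h !![0,1;0,0] (by simp [Matrix.trace_fin_two])
  have h2 := h !![0,0;1,0] (by simp [Matrix.trace_fin_two])
  have h3 := h !![1,0;0,-1] (by simp [Matrix.trace_fin_two])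
  simp [Matrix.trace_fin_two, Matrix.mul_apply, Fin.sum_univ_two] at h1 h2 h3 hX
  ext i j
  fin_cases i <;> fin_cases j <;> simp
  · linear_combination (hX + h3) / 2
  · exact h2
  · exact h1
  · linear_combination (hX - h3) / 2

lemma aux2 (φ X : Matrix (Fin 2) (Fin 2) ℂ) (hφtr : φ.trace = 0) (hφ : φ ≠ 0)
    (hXtr : X.trace = 0) (hc : X * φ = φ * X) : ∃ c : ℂ, X = c • φ := by
  rw [← Matrix.ext_iff] at hc
  have e00 := hc 0 0
  have e01 := hc 0 1
  have e10 := hc 1 0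
  simp [Matrix.mul_apply, Fin.sum_univ_two] at e00 e01 e10
  simp [Matrix.trace_fin_two] at hφtr hXtr
  have hφ11 : φ 1 1 = -φ 0 0 := by linear_combination hφtr
  have hX11 : X 1 1 = -X 0 0 := by linear_combination hXtr
  rw [hφ11, hX11] at e01 e10
  -- e00 : yr = qz ; e01 : qx = py ; e10 : pz = rx
  have eA : X 0 1 * φ 1 0 = φ 0 1 * X 1 0 := by linear_combination e00
  have eB : X 0 0 * φ 0 1 = φ 0 0 * X 0 1 := by linear_combination e01 / 2
  have eC : φ 0 0 * X 1 0 = X 0 0 * φ 1 0 := by linear_combination e10 / 2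
  have hne : φ 0 0 ≠ 0 ∨ φ 0 1 ≠ 0 ∨ φ 1 0 ≠ 0 := by
    by_contra hcon
    push_neg at hcon
    apply hφ
    ext i j
    fin_cases i <;> fin_cases j <;>
      simp [hcon.1, hcon.2.1, hcon.2.2, hφ11]
  have scale : ∀ u v : ℂ, u ≠ 0 → u • X = v • φ → ∃ c : ℂ, X = c • φ := by
    intro u v hu huv
    refine ⟨u⁻¹ * v, ?_⟩
    have := congrArg (fun M => u⁻¹ • M) huv
    simpa [smul_smul, inv_mul_cancel₀ hu] using this
  rcases hne with hp | hq | hr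
  · apply scale (φ 0 0) (X 0 0) hp
    ext i j
    fin_cases i <;> fin_cases j <;>
      simp only [Fin.mk_zero, Fin.mk_one, Fin.isValue, Matrix.smul_apply, smul_eq_mul, hφ11, hX11]
    · ring
    · linear_combination -eB
    · linear_combination eC
    · ring
  · apply scale (φ 0 1) (X 0 1) hq
    ext i j
    fin_cases i <;> fin_cases j <;>
      simp only [Fin.mk_zero, Fin.mk_one, Fin.isValue, Matrix.smul_apply, smul_eq_mul, hφ11, hX11]
    · linear_combination eB
    · ring
    · linear_combination -eA
    · linear_combination -eB
  · apply scale (φ 1 0) (X 1 0) hr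
    ext i j
    fin_cases i <;> fin_cases j <;>
      simp only [Fin.mk_zero, Fin.mk_one, Fin.isValue, Matrix.smul_apply, smul_eq_mul, hφ11, hX11]
    · linear_combination -eC
    · linear_combination eA
    · ring
    · linear_combination eC

/-- Critical points of `f(A,φ) = tr(φ · Σᵢ [Aᵢ,Bᵢ])` on `sl₂(ℂ)^{2g} × sl₂(ℂ)`
at a point with `φ ≠ 0`: the vanishing of all derivatives is equivalent to every `Aᵢ` and
every `Bᵢ` being a scalar multiple of `φ`. -/
theorem statement5 (g : ℕ) (hg : 1 ≤ g)
    (φ : Matrix (Fin 2) (Fin 2) ℂ) (hφtr : φ.trace = 0) (hφ : φ ≠ 0)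
    (A B : Fin g → Matrix (Fin 2) (Fin 2) ℂ)
    (hA : ∀ i, (A i).trace = 0) (hB : ∀ i, (B i).trace = 0) :
    ((∀ a : Matrix (Fin 2) (Fin 2) ℂ, a.trace = 0 → ∀ i : Fin g,
        (φ * (a * B i - B i * a)).trace = 0 ∧ (φ * (A i * a - a * A i)).trace = 0) ∧
      (∀ ψ : Matrix (Fin 2) (Fin 2) ℂ, ψ.trace = 0 →
        (ψ * ∑ i : Fin g, (A i * B i - B i * A i)).trace = 0))
    ↔ (∀ i : Fin g, (∃ c : ℂ, A i = c • φ) ∧ (∃ c : ℂ, B i = c • φ)) := by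
  constructor
  · rintro ⟨h1, _⟩ i
    constructor
    · have hcomm : (φ * A i - A i * φ) = 0 := by
        apply aux1
        · simp [Matrix.trace_sub, Matrix.trace_mul_comm φ (A i)]
        · intro a ha
          have h := (h1 a ha i).2
          simp only [Matrix.mul_sub, Matrix.sub_mul, Matrix.trace_sub] at h ⊢
          have h3 : (φ * (A i * a)).trace = (φ * A i * a).trace := by rw [mul_assoc]
          linear_combination h + keytr φ (A i) a - h3
      rw [sub_eq_zero] at hcomm
      exact aux2 φ (A i) hφtr hφ (hA i) hcomm.symm
    · have hcomm : (B i * φ - φ * B i) = 0 := by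
        apply aux1
        · simp [Matrix.trace_sub, Matrix.trace_mul_comm φ (B i)]
        · intro a ha
          have h := (h1 a ha i).1
          simp only [Matrix.mul_sub, Matrix.sub_mul, Matrix.trace_sub] at h ⊢
          have h2 : (φ * (B i * a)).trace = (φ * B i * a).trace := by rw [mul_assoc]
          linear_combination h - keytr φ (B i) a + h2
      rw [sub_eq_zero] at hcomm
      exact aux2 φ (B i) hφtr hφ (hB i) hcomm
  · intro h
    constructor
    · intro a ha i
      obtain ⟨⟨c, hc⟩, ⟨d, hd⟩⟩ := h i
      constructor
      · rw [hd]
        simp only [Matrix.mul_smul, Matrix.smul_mul, ← smul_sub, Matrix.trace_smul]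
        rw [Matrix.mul_sub, Matrix.trace_sub, ← mul_assoc,
          Matrix.trace_mul_comm (φ * a) φ]
        simp
      · rw [hc]
        simp only [Matrix.mul_smul, Matrix.smul_mul, ← smul_sub, Matrix.trace_smul]
        rw [Matrix.mul_sub, Matrix.trace_sub,
          Matrix.trace_mul_comm φ (a * φ), mul_assoc a φ φ, Matrix.trace_mul_comm a (φ * φ),
          ← mul_assoc]
        simp
    · intro ψ hψ
      have hz : ∑ i : Fin g, (A i * B i - B i * A i) = 0 := by
        apply Finset.sum_eq_zero
        intro i _
        obtain ⟨⟨c, hc⟩, ⟨d, hd⟩⟩ := h i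
        rw [hc, hd]
        simp only [Matrix.smul_mul, Matrix.mul_smul, smul_smul]
        rw [mul_comm c d, sub_self]
      rw [hz, mul_zero, Matrix.trace_zero]
end

section
/- Let N ≥ 1 be an integer, let λ₀,…,λ_{N−1} be pairwise distinct complex numbers, and let t be any complex number. Then Σ_{i=0}^{N−1} ∏_{j≠i} (λ_i − λ_j + t)/(λ_j − λ_i) = (−1)^{N−1}·N. -/
open Polynomial Finset

lemma coeff_prod_X_add_C_top {N : ℕ} (hN : 1 ≤ N) (r : Fin N → ℂ) :
    (∏ j : Fin N, (X + C (r j))).coeff (N - 1) = ∑ j, r j := by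
  rw [Finset.prod_X_add_C_coeff (h := by simp [Nat.sub_le])]
  rw [show #(univ : Finset (Fin N)) - (N-1) = 1 by simp; omega, Finset.powersetCard_one]
  rw [Finset.sum_map]
  simp

lemma key {N : ℕ} (l : Fin N → ℂ) (hl : Function.Injective l)
    (p : ℂ[X]) (hdeg : p.degree < N) :
    ∑ i : Fin N, p.eval (l i) / ∏ j ∈ Finset.univ.erase i, (l i - l j)
      = p.coeff (N - 1) := by
  have hinj : Set.InjOn l (univ : Finset (Fin N)) := hl.injOn
  have hcard : #(univ : Finset (Fin N)) = N := by simp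
  have hb : ∀ i : Fin N, (Lagrange.basis univ l i).coeff (N - 1)
      = (∏ j ∈ Finset.univ.erase i, (l i - l j))⁻¹ := by
    intro i
    have hnd : (Lagrange.basis univ l i).natDegree = N - 1 := by
      rw [Lagrange.natDegree_basis hinj (mem_univ i), hcard]
    rw [← hnd, ← leadingCoeff, Lagrange.basis, leadingCoeff_prod, ← Finset.prod_inv_distrib]
    refine Finset.prod_congr rfl fun j hj => ?_
    rw [Lagrange.basisDivisor, leadingCoeff_mul, leadingCoeff_C,
      leadingCoeff_X_sub_C, mul_one]
  have := Lagrange.eq_interpolate hinj (by rwa [hcard])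
  conv_rhs => rw [this]
  rw [Lagrange.interpolate_apply, finset_sum_coeff]
  refine Finset.sum_congr rfl fun i _ => ?_
  rw [coeff_C_mul, hb i, div_eq_mul_inv]

/-- for pairwise distinct `λ₀,…,λ_{N−1} ∈ ℂ` and any `t ∈ ℂ`,
`Σᵢ ∏_{j≠i} (λᵢ − λⱼ + t)/(λⱼ − λᵢ) = (−1)^{N−1} N` (equivariant localisation of
`∫_{ℙ^{N−1}} e(T*ℙ ⊗ t)`). -/
theorem statement13 (N : ℕ) (hN : 1 ≤ N) (l : Fin N → ℂ)
    (hl : Function.Injective l) (t : ℂ) :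
    ∑ i : Fin N, ∏ j ∈ Finset.univ.erase i, (l i - l j + t) / (l j - l i)
      = (-1 : ℂ) ^ (N - 1) * N := by
  have hD : ∀ i : Fin N, (∏ j ∈ Finset.univ.erase i, (l i - l j)) ≠ 0 := by
    intro i
    refine Finset.prod_ne_zero_iff.2 fun j hj => sub_ne_zero_of_ne ?_
    exact fun h => (Finset.mem_erase.1 hj).1 (hl h).symm
  have hmain : ∑ i : Fin N, (∏ j ∈ Finset.univ.erase i, (l i - l j + t))
      / ∏ j ∈ Finset.univ.erase i, (l i - l j) = (N : ℂ) := by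
    rcases eq_or_ne t 0 with ht | ht
    · simp only [ht, add_zero]
      rw [Finset.sum_congr rfl fun i _ => div_self (hD i)]
      simp
    · set P1 : ℂ[X] := ∏ j : Fin N, (X + C (t - l j)) with hP1
      set P2 : ℂ[X] := ∏ j : Fin N, (X + C (-(l j))) with hP2
      set p : ℂ[X] := P1 - P2 with hp
      have h1 : P1.Monic := monic_prod_of_monic _ _ fun j _ => monic_X_add_C _
      have h2 : P2.Monic := monic_prod_of_monic _ _ fun j _ => monic_X_add_C _
      have hd1 : P1.natDegree = N := by
        rw [hP1, natDegree_prod_of_monic _ _ fun j _ => monic_X_add_C _]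
        simp only [natDegree_X_add_C]; simp
      have hd2 : P2.natDegree = N := by
        rw [hP2, natDegree_prod_of_monic _ _ fun j _ => monic_X_add_C _]
        simp only [natDegree_X_add_C]; simp
      have hdeg : p.degree < N := by
        have := degree_sub_lt (p := P1) (q := P2)
          (by rw [degree_eq_natDegree h1.ne_zero, degree_eq_natDegree h2.ne_zero, hd1, hd2])
          h1.ne_zero (by rw [h1.leadingCoeff, h2.leadingCoeff])
        rwa [degree_eq_natDegree h1.ne_zero, hd1] at this
      have heval : ∀ i : Fin N, p.eval (l i)
          = t * ∏ j ∈ Finset.univ.erase i, (l i - l j + t) := by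
        intro i
        rw [hp, eval_sub, hP1, hP2, eval_prod, eval_prod]
        simp only [eval_add, eval_X, eval_C]
        rw [show (∏ j : Fin N, (l i + -(l j))) = 0 from
          Finset.prod_eq_zero (Finset.mem_univ i) (by ring), sub_zero]
        rw [← Finset.mul_prod_erase _ _ (Finset.mem_univ i),
          show l i + (t - l i) = t by ring]
        exact congrArg _ (Finset.prod_congr rfl fun j _ => by ring)
      have hcoeff : p.coeff (N - 1) = N * t := by
        rw [hp, coeff_sub, hP1, hP2, coeff_prod_X_add_C_top hN, coeff_prod_X_add_C_top hN]
        rw [← Finset.sum_sub_distrib]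
        simp [mul_comm]
      have hsum := key l hl p hdeg
      rw [hcoeff] at hsum
      have this2 : ∑ i : Fin N, (t * ∏ j ∈ Finset.univ.erase i, (l i - l j + t))
          / ∏ j ∈ Finset.univ.erase i, (l i - l j) = (N : ℂ) * t := by
        rw [← hsum]; exact Finset.sum_congr rfl fun i _ => by rw [heval i]
      have h3 : t * ∑ i : Fin N, (∏ j ∈ Finset.univ.erase i, (l i - l j + t))
          / ∏ j ∈ Finset.univ.erase i, (l i - l j) = (N : ℂ) * t := by
        rw [Finset.mul_sum, ← this2]
        exact Finset.sum_congr rfl fun i _ => by rw [mul_div_assoc]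
      exact mul_left_cancel₀ ht (by rw [h3, mul_comm])
  have hpm : ((-1 : ℂ) ^ (N - 1))⁻¹ = (-1 : ℂ) ^ (N - 1) := by
    rw [← inv_pow, inv_neg, inv_one]
  calc ∑ i : Fin N, ∏ j ∈ Finset.univ.erase i, (l i - l j + t) / (l j - l i)
      = ∑ i : Fin N, (-1 : ℂ) ^ (N - 1) *
        ((∏ j ∈ Finset.univ.erase i, (l i - l j + t))
          / ∏ j ∈ Finset.univ.erase i, (l i - l j)) := by
        refine Finset.sum_congr rfl fun i _ => ?_
        rw [Finset.prod_div_distrib]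
        have : (∏ j ∈ Finset.univ.erase i, (l j - l i))
            = (-1 : ℂ) ^ (N - 1) * ∏ j ∈ Finset.univ.erase i, (l i - l j) := by
          rw [show (N - 1 : ℕ) = #(Finset.univ.erase i) by simp, ← Finset.prod_const,
            ← Finset.prod_mul_distrib]
          exact Finset.prod_congr rfl fun j _ => by ring
        rw [this, div_mul_eq_div_div_swap, div_eq_mul_inv
          ((∏ j ∈ Finset.univ.erase i, (l i - l j + t)) / ∏ j ∈ Finset.univ.erase i, (l i - l j)),
          hpm, mul_comm]
    _ = (-1 : ℂ) ^ (N - 1) * N := by rw [← Finset.mul_sum, hmain]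
end
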